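/- Let 0 < y < 1 and let a > 0 with a ∉ [1−√y, 1+√y]; set φ(a) = a + ya/(a−1). Then m₃(φ(a)) = ∫ x/(φ(a)−x)² dF_y(x) = 1/((a−1)² − y). -/

import Mathlib

open MeasureTheory Real
open scoped ENNReal NNReal

/-- Density of the Marčenko–Pastur distribution with ratio parameter `c` (the absolutely
continuous part; it vanishes outside `[(1-√c)², (1+√c)²]`). -/
noncomputable def mpDensity (c x : ℝ) : ℝ :=
  if (1 - Real.sqrt c) ^ 2 ≤ x ∧ x ≤ (1 + Real.sqrt c) ^ 2 then
    Real.sqrt ((x - (1 - Real.sqrt c) ^ 2) * ((1 + Real.sqrt c) ^ 2 - x)) /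
      (2 * Real.pi * c * x)
  else 0

/-- The Marčenko–Pastur law with ratio parameter `c > 0`: an atom of mass `max (1 - 1/c) 0`
at `0` plus the absolutely continuous part with density `mpDensity c`.  For `c < 1` (in
particular for `c = y ∈ (0,1)`) the atom vanishes and this is the measure `F_y` with density
`(1/(2πxy))√((x-a_y)(b_y-x))` on `[a_y, b_y]`, `a_y = (1-√y)²`, `b_y = (1+√y)²`. -/
noncomputable def mpLaw (c : ℝ) : Measure ℝ :=
  ENNReal.ofReal (1 - 1 / c) • Measure.dirac 0 +
    (volume : Measure ℝ).withDensity fun x => ENNReal.ofReal (mpDensity c x)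

/-- The map `φ(a) = a + ya/(a-1)` sending a spike outside `[1-√y, 1+√y]` to the a.s. limit
of the corresponding extreme sample eigenvalue, outside the Marčenko–Pastur support. -/
noncomputable def phiSpike (y a : ℝ) : ℝ := a + y * a / (a - 1)

lemma core_gt (A B lam : ℝ) (hAB : A < B) (hlam : B < lam) :
    ∫ x in A..B, Real.sqrt ((x - A) * (B - x)) / (lam - x) ^ 2
      = π * ((2 * lam - A - B) / (2 * Real.sqrt ((lam - A) * (lam - B))) - 1) := by
  have hlA : A < lam := hAB.trans hlam
  have hBA : (0:ℝ) < B - A := by linarith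
  set D := Real.sqrt ((lam - A) * (lam - B)) with hD
  have hD2 : D ^ 2 = (lam - A) * (lam - B) := Real.sq_sqrt (by nlinarith)
  have hDpos : 0 < D := Real.sqrt_pos.mpr (by nlinarith)
  set c : ℝ := (2 * lam - A - B) / (2 * D) with hc
  set F : ℝ → ℝ := fun t =>
    Real.sqrt ((t - A) * (B - t)) / (lam - t)
      - c * Real.arcsin ((lam * (A + B) - 2 * A * B - (2 * lam - A - B) * t) / ((B - A) * (lam - t)))
      - Real.arcsin ((2 * t - A - B) / (B - A)) with hF
  have hderiv : ∀ x ∈ Set.Ioo A B,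
      HasDerivAt F (Real.sqrt ((x - A) * (B - x)) / (lam - x) ^ 2) x := by
    intro x hx
    obtain ⟨hxA, hxB⟩ := hx
    have hP : 0 < (x - A) * (B - x) := mul_pos (by linarith) (by linarith)
    set s := Real.sqrt ((x - A) * (B - x)) with hs
    have hs2 : s ^ 2 = (x - A) * (B - x) := Real.sq_sqrt hP.le
    have hspos : 0 < s := Real.sqrt_pos.mpr hP
    have hlx : 0 < lam - x := by linarith
    have h1 : HasDerivAt (fun t => (t - A) * (B - t)) (A + B - 2 * x) x := by
      have h := ((hasDerivAt_id x).sub_const A).mul ((hasDerivAt_const x B).sub (hasDerivAt_id x))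
      simp only [id_eq] at h
      refine h.congr_deriv ?_; simp only [Pi.sub_apply, id_eq]; ring
    have hsd : HasDerivAt (fun t => Real.sqrt ((t - A) * (B - t)))
        ((A + B - 2 * x) / (2 * s)) x := h1.sqrt (ne_of_gt hP)
    have term1 : HasDerivAt (fun t => Real.sqrt ((t - A) * (B - t)) / (lam - t))
        (((A + B - 2 * x) * (lam - x) + 2 * s ^ 2) / (2 * s * (lam - x) ^ 2)) x := by
      have h := hsd.div ((hasDerivAt_const x lam).sub (hasDerivAt_id x)) (ne_of_gt hlx)
      refine h.congr_deriv ?_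
      simp only [Pi.sub_apply, id_eq]
      field_simp
      ring
    -- arcsin of w
    have hw : HasDerivAt (fun t => (2 * t - A - B) / (B - A)) (2 / (B - A)) x := by
      have h2 : HasDerivAt (fun t : ℝ => 2 * t - A - B) 2 x := by
        have h := ((hasDerivAt_id x).const_mul 2).sub_const (A + B)
        simp only [id_eq] at h
        refine h.congr_deriv ?_ |>.congr_of_eventuallyEq (Filter.Eventually.of_forall fun t => ?_) <;> simp <;> ring
      exact h2.div_const (B - A)
    have hw1 : (-1:ℝ) < (2 * x - A - B) / (B - A) := by rw [lt_div_iff₀ hBA]; linarith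
    have hw2 : (2 * x - A - B) / (B - A) < 1 := by rw [div_lt_iff₀ hBA]; linarith
    have keyw : (B - A) ^ 2 - (2 * x - A - B) ^ 2 = (2 * s) ^ 2 := by
      linear_combination (-4 : ℝ) * hs2
    have hsqw : Real.sqrt (1 - ((2 * x - A - B) / (B - A)) ^ 2) = 2 * s / (B - A) := by
      rw [show 1 - ((2 * x - A - B) / (B - A)) ^ 2 = (2 * s / (B - A)) ^ 2 by
        rw [div_pow, div_pow, eq_div_iff (pow_ne_zero _ hBA.ne'), sub_mul,
          div_mul_cancel₀ _ (pow_ne_zero _ hBA.ne'), one_mul]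
        linear_combination keyw]
      exact Real.sqrt_sq (by positivity)
    have arcw : HasDerivAt (fun t => Real.arcsin ((2 * t - A - B) / (B - A))) (1 / s) x := by
      have h := (Real.hasDerivAt_arcsin (ne_of_gt hw1) (ne_of_lt hw2)).comp x hw
      refine h.congr_deriv ?_
      rw [hsqw]
      field_simp
    -- arcsin of u
    have hQx : (B - A) * (lam - x) ≠ 0 := by positivity
    have hNder : HasDerivAt (fun t => lam * (A + B) - 2 * A * B - (2 * lam - A - B) * t)
        (-(2 * lam - A - B)) x := by
      have h := ((hasDerivAt_id x).const_mul (2 * lam - A - B)).const_sub (lam * (A + B) - 2 * A * B)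
      simp only [id_eq] at h
      refine h.congr_deriv ?_; ring
    have hQder : HasDerivAt (fun t => (B - A) * (lam - t)) (-(B - A)) x := by
      have h := ((hasDerivAt_id x).const_sub lam).const_mul (B - A)
      simp only [id_eq] at h
      refine h.congr_deriv ?_; ring
    have hu0 := hNder.div hQder hQx
    have huval : (-(2 * lam - A - B) * ((B - A) * (lam - x)) -
        (lam * (A + B) - 2 * A * B - (2 * lam - A - B) * x) * -(B - A)) / ((B - A) * (lam - x)) ^ 2
        = -2 * D ^ 2 / ((B - A) * (lam - x) ^ 2) := by
      rw [div_eq_div_iff (pow_ne_zero _ hQx) (by positivity)]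
      linear_combination (2 * ((B - A) * (lam - x)) ^ 2) * hD2
    rw [huval] at hu0
    have key : ((B - A) * (lam - x)) ^ 2
        - (lam * (A + B) - 2 * A * B - (2 * lam - A - B) * x) ^ 2 = 4 * D ^ 2 * s ^ 2 := by
      linear_combination (-4 * s ^ 2) * hD2 - (4 * ((lam - A) * (lam - B))) * hs2
    have huu : 1 - ((lam * (A + B) - 2 * A * B - (2 * lam - A - B) * x) / ((B - A) * (lam - x))) ^ 2
        = (2 * D * s / ((B - A) * (lam - x))) ^ 2 := by
      rw [div_pow, div_pow, eq_div_iff (pow_ne_zero _ hQx), sub_mul,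
        div_mul_cancel₀ _ (pow_ne_zero _ hQx)]
      linear_combination key
    have huupos : 0 < 1 - ((lam * (A + B) - 2 * A * B - (2 * lam - A - B) * x) / ((B - A) * (lam - x))) ^ 2 := by
      rw [huu]; positivity
    have hsqu : Real.sqrt (1 - ((lam * (A + B) - 2 * A * B - (2 * lam - A - B) * x) / ((B - A) * (lam - x))) ^ 2)
        = 2 * D * s / ((B - A) * (lam - x)) := by
      rw [huu]; exact Real.sqrt_sq (by positivity)
    have hu1 : (lam * (A + B) - 2 * A * B - (2 * lam - A - B) * x) / ((B - A) * (lam - x)) ≠ -1 := by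
      intro h; rw [h] at huupos; norm_num at huupos
    have hu2 : (lam * (A + B) - 2 * A * B - (2 * lam - A - B) * x) / ((B - A) * (lam - x)) ≠ 1 := by
      intro h; rw [h] at huupos; norm_num at huupos
    have arcu : HasDerivAt (fun t =>
        Real.arcsin ((lam * (A + B) - 2 * A * B - (2 * lam - A - B) * t) / ((B - A) * (lam - t))))
        (-D / ((lam - x) * s)) x := by
      have h := (Real.hasDerivAt_arcsin hu1 hu2).comp x hu0
      refine h.congr_deriv ?_
      rw [hsqu]
      field_simp
    have hcomb := (term1.sub (arcu.const_mul c)).sub arcw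
    refine hcomb.congr_deriv ?_
    rw [hc]
    field_simp
    ring_nf
  have c1 : Continuous fun t : ℝ => Real.sqrt ((t - A) * (B - t)) :=
    Real.continuous_sqrt.comp ((continuous_id.sub continuous_const).mul
      (continuous_const.sub continuous_id))
  have c2 : Continuous fun t : ℝ => lam - t := continuous_const.sub continuous_id
  have c2ne : ∀ x ∈ Set.Icc A B, lam - x ≠ 0 := by
    intro x hx
    have h2 := hx.2
    have h3 : 0 < lam - x := by linarith
    exact ne_of_gt h3
  have hcont : ContinuousOn F (Set.Icc A B) := by
    rw [hF]
    have c3 : Continuous fun t : ℝ => lam * (A + B) - 2 * A * B - (2 * lam - A - B) * t :=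
      continuous_const.sub (continuous_const.mul continuous_id)
    have c4 : Continuous fun t : ℝ => (B - A) * (lam - t) := continuous_const.mul c2
    have c5 : Continuous fun t : ℝ => (2 * t - A - B) / (B - A) :=
      (((continuous_const.mul continuous_id).sub continuous_const).sub continuous_const).div_const _
    refine ((c1.continuousOn.div c2.continuousOn c2ne).sub
      (continuousOn_const.mul (Real.continuous_arcsin.comp_continuousOn
        (c3.continuousOn.div c4.continuousOn ?_)))).sub
      (Real.continuous_arcsin.comp c5).continuousOn
    intro x hx
    have := hx.2
    have h0 : 0 < (B - A) * (lam - x) := mul_pos hBA (by linarith)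
    exact ne_of_gt h0
  have hint : IntervalIntegrable (fun x => Real.sqrt ((x - A) * (B - x)) / (lam - x) ^ 2)
      volume A B := by
    apply ContinuousOn.intervalIntegrable
    rw [Set.uIcc_of_le hAB.le]
    refine c1.continuousOn.div (c2.pow 2).continuousOn ?_
    intro x hx
    exact pow_ne_zero _ (c2ne x hx)
  rw [intervalIntegral.integral_eq_sub_of_hasDerivAt_of_le hAB.le hcont hderiv hint]
  have hFB : F B = c * (π / 2) - π / 2 := by
    rw [hF]
    simp only
    rw [show (B - A) * (B - B) = 0 by ring, Real.sqrt_zero, zero_div,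
      show (2 * B - A - B) / (B - A) = 1 by rw [div_eq_one_iff_eq hBA.ne']; ring,
      show (lam * (A + B) - 2 * A * B - (2 * lam - A - B) * B) / ((B - A) * (lam - B)) = -1 by
        rw [div_eq_iff (ne_of_gt (mul_pos hBA (by linarith)))]; ring,
      Real.arcsin_one, Real.arcsin_neg_one]
    ring
  have hFA : F A = -(c * (π / 2)) + π / 2 := by
    rw [hF]
    simp only
    rw [show (A - A) * (B - A) = 0 by ring, Real.sqrt_zero, zero_div,
      show (2 * A - A - B) / (B - A) = -1 by rw [div_eq_iff hBA.ne']; ring,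
      show (lam * (A + B) - 2 * A * B - (2 * lam - A - B) * A) / ((B - A) * (lam - A)) = 1 by
        rw [div_eq_iff (ne_of_gt (mul_pos hBA (by linarith)))]; ring,
      Real.arcsin_one, Real.arcsin_neg_one]
    ring
  rw [hFB, hFA, hc]
  ring

lemma core_lt (A B lam : ℝ) (hAB : A < B) (hlam : lam < A) :
    ∫ x in A..B, Real.sqrt ((x - A) * (B - x)) / (lam - x) ^ 2
      = π * ((A + B - 2 * lam) / (2 * Real.sqrt ((lam - A) * (lam - B))) - 1) := by
  have hmu : B < A + B - lam := by linarith
  have key := core_gt A B (A + B - lam) hAB hmu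
  have h2 : (∫ x in A..B, Real.sqrt ((x - A) * (B - x)) / ((A + B - lam) - x) ^ 2)
      = ∫ x in (A + B) - B..(A + B) - A,
          Real.sqrt ((x - A) * (B - x)) / ((A + B - lam) - x) ^ 2 := by
    rw [show (A + B) - B = A by ring, show (A + B) - A = B by ring]
  have h3 := intervalIntegral.integral_comp_sub_left (a := A) (b := B)
      (fun x => Real.sqrt ((x - A) * (B - x)) / ((A + B - lam) - x) ^ 2) (A + B)
  rw [← h2] at h3
  have h4 : (∫ x in A..B, Real.sqrt ((x - A) * (B - x)) / (lam - x) ^ 2)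
      = ∫ x in A..B, Real.sqrt (((A + B - x) - A) * (B - (A + B - x))) /
          ((A + B - lam) - (A + B - x)) ^ 2 := by
    apply intervalIntegral.integral_congr
    intro x hx
    dsimp only
    rw [show ((A + B - x) - A) * (B - (A + B - x)) = (x - A) * (B - x) by ring,
        show ((A + B - lam) - (A + B - x)) ^ 2 = (lam - x) ^ 2 by ring]
  rw [h4]
  rw [show (∫ x in A..B, Real.sqrt (((A + B - x) - A) * (B - (A + B - x))) /
      ((A + B - lam) - (A + B - x)) ^ 2)
    = ∫ x in A..B, Real.sqrt ((x - A) * (B - x)) / ((A + B - lam) - x) ^ 2 from h3, key,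
    show 2 * (A + B - lam) - A - B = A + B - 2 * lam by ring,
    show ((A + B - lam) - A) * ((A + B - lam) - B) = (lam - A) * (lam - B) by ring]

lemma mpDensity_measurable (c : ℝ) : Measurable (mpDensity c) := by
  unfold mpDensity
  refine Measurable.ite ?_ ?_ measurable_const
  · exact measurableSet_Icc
  · apply Measurable.div
    · exact (Real.continuous_sqrt.comp ((continuous_id.sub continuous_const).mul
        (continuous_const.sub continuous_id))).measurable
    · exact measurable_id.const_mul _

lemma mpLaw_eq (y : ℝ) (hy0 : 0 < y) (hy1 : y < 1) :
    mpLaw y = (volume : Measure ℝ).withDensity fun x => ENNReal.ofReal (mpDensity y x) := by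
  unfold mpLaw
  have h1 : (1:ℝ) ≤ 1 / y := by rw [le_div_iff₀ hy0]; linarith
  rw [ENNReal.ofReal_eq_zero.mpr (by linarith), zero_smul, zero_add]

lemma mp_integral (y lam : ℝ) (hy0 : 0 < y) (hy1 : y < 1) :
    (∫ x, x / (lam - x) ^ 2 ∂mpLaw y)
      = (1 / (2 * π * y)) *
        ∫ x in ((1 - Real.sqrt y) ^ 2)..((1 + Real.sqrt y) ^ 2),
          Real.sqrt ((x - (1 - Real.sqrt y) ^ 2) * ((1 + Real.sqrt y) ^ 2 - x)) / (lam - x) ^ 2 := by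
  have hsy0 : 0 < Real.sqrt y := Real.sqrt_pos.mpr hy0
  have hsy2 : Real.sqrt y ^ 2 = y := Real.sq_sqrt hy0.le
  have hsy1 : Real.sqrt y < 1 := by nlinarith
  have hA0 : 0 < (1 - Real.sqrt y) ^ 2 := pow_pos (by linarith) 2
  have hAB : (1 - Real.sqrt y) ^ 2 ≤ (1 + Real.sqrt y) ^ 2 := by nlinarith
  rw [mpLaw_eq y hy0 hy1]
  rw [show (fun x => ENNReal.ofReal (mpDensity y x))
      = fun x => ((Real.toNNReal (mpDensity y x) : ℝ≥0) : ℝ≥0∞) from rfl]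
  rw [integral_withDensity_eq_integral_smul (mpDensity_measurable y).real_toNNReal]
  have hfun : (fun x => (Real.toNNReal (mpDensity y x)) • (x / (lam - x) ^ 2))
      = Set.indicator (Set.Icc ((1 - Real.sqrt y) ^ 2) ((1 + Real.sqrt y) ^ 2))
          (fun x => (1 / (2 * π * y)) *
            (Real.sqrt ((x - (1 - Real.sqrt y) ^ 2) * ((1 + Real.sqrt y) ^ 2 - x)) / (lam - x) ^ 2)) := by
    funext x
    rw [Set.indicator_apply]
    by_cases hx : x ∈ Set.Icc ((1 - Real.sqrt y) ^ 2) ((1 + Real.sqrt y) ^ 2)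
    · rw [if_pos hx]
      have hx0 : 0 < x := lt_of_lt_of_le hA0 hx.1
      have hd : mpDensity y x
          = Real.sqrt ((x - (1 - Real.sqrt y) ^ 2) * ((1 + Real.sqrt y) ^ 2 - x)) / (2 * π * y * x) := by
        unfold mpDensity
        rw [if_pos ⟨hx.1, hx.2⟩]
      rw [hd, NNReal.smul_def, Real.coe_toNNReal _ (by positivity), smul_eq_mul]
      rw [div_mul_div_comm, div_mul_div_comm, one_mul,
        show 2 * π * y * x * (lam - x) ^ 2 = 2 * π * y * (lam - x) ^ 2 * x by ring,
        mul_div_mul_right _ _ (ne_of_gt hx0)]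
    · rw [if_neg hx]
      have hd : mpDensity y x = 0 := by
        unfold mpDensity
        rw [if_neg (fun h => hx ⟨h.1, h.2⟩)]
      rw [hd]
      simp
  rw [hfun, integral_indicator measurableSet_Icc, integral_Icc_eq_integral_Ioc,
    ← intervalIntegral.integral_of_le hAB, intervalIntegral.integral_const_mul]

/-- `m₃(φ(a)) = ∫ x/(φ(a)−x)² dF_y(x) = 1/((a−1)²−y)`. -/
theorem mp_m3_phi (y a : ℝ) (hy0 : 0 < y) (hy1 : y < 1) (ha : 0 < a)
    (hout : a ∉ Set.Icc (1 - Real.sqrt y) (1 + Real.sqrt y)) :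
    (∫ x, x / (phiSpike y a - x) ^ 2 ∂mpLaw y) = 1 / ((a - 1) ^ 2 - y) := by
  rw [mp_integral y (phiSpike y a) hy0 hy1]
  rw [Set.mem_Icc, not_and_or, not_le, not_le] at hout
  set s := Real.sqrt y with hsdef
  have hs2 : s ^ 2 = y := Real.sq_sqrt hy0.le
  have hs0 : 0 < s := Real.sqrt_pos.mpr hy0
  have hs1 : s < 1 := by nlinarith
  have hAB : (1 - s) ^ 2 < (1 + s) ^ 2 := by nlinarith
  rw [← hs2]
  simp only [phiSpike]
  rcases hout with h | h
  · -- a < 1 - s, so lam < A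
    have ha1 : a - 1 < 0 := by linarith
    have hne : a - 1 ≠ 0 := ne_of_lt ha1
    have hne' : (1:ℝ) - a ≠ 0 := by intro hc; apply hne; linarith
    have hnum : a - 1 + s < 0 := by linarith
    have hD : (a - 1) ^ 2 - s ^ 2 ≠ 0 := by nlinarith
    have hxid : a + s ^ 2 * a / (a - 1) - (1 - s) ^ 2 = (a - 1 + s) ^ 2 / (a - 1) := by
      field_simp; ring
    have hlt : a + s ^ 2 * a / (a - 1) < (1 - s) ^ 2 := by
      have h2 := div_neg_of_pos_of_neg (pow_two_pos_of_ne_zero (ne_of_lt hnum)) ha1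
      rw [← hxid] at h2
      linarith
    rw [core_lt _ _ _ hAB hlt]
    have hDpos : 0 < ((a - 1) ^ 2 - s ^ 2) / (1 - a) := by
      apply div_pos
      · nlinarith
      · linarith
    have hsq : Real.sqrt ((a + s ^ 2 * a / (a - 1) - (1 - s) ^ 2) *
          (a + s ^ 2 * a / (a - 1) - (1 + s) ^ 2))
        = ((a - 1) ^ 2 - s ^ 2) / (1 - a) := by
      rw [show (a + s ^ 2 * a / (a - 1) - (1 - s) ^ 2) * (a + s ^ 2 * a / (a - 1) - (1 + s) ^ 2)
          = (((a - 1) ^ 2 - s ^ 2) / (1 - a)) ^ 2 by field_simp; ring]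
      exact Real.sqrt_sq hDpos.le
    rw [hsq]
    field_simp
    ring
  · -- 1 + s < a, so lam > B
    have ha1 : 0 < a - 1 := by linarith
    have hne : a - 1 ≠ 0 := ne_of_gt ha1
    have hnum : 0 < a - 1 - s := by linarith
    have hD : (a - 1) ^ 2 - s ^ 2 ≠ 0 := by nlinarith
    have hxid : a + s ^ 2 * a / (a - 1) - (1 + s) ^ 2 = (a - 1 - s) ^ 2 / (a - 1) := by
      field_simp; ring
    have hgt : (1 + s) ^ 2 < a + s ^ 2 * a / (a - 1) := by
      have h2 := div_pos (pow_two_pos_of_ne_zero (ne_of_gt hnum)) ha1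
      rw [← hxid] at h2
      linarith
    rw [core_gt _ _ _ hAB hgt]
    have hDpos : 0 < ((a - 1) ^ 2 - s ^ 2) / (a - 1) := by
      apply div_pos
      · nlinarith
      · linarith
    have hsq : Real.sqrt ((a + s ^ 2 * a / (a - 1) - (1 - s) ^ 2) *
          (a + s ^ 2 * a / (a - 1) - (1 + s) ^ 2))
        = ((a - 1) ^ 2 - s ^ 2) / (a - 1) := by
      rw [show (a + s ^ 2 * a / (a - 1) - (1 - s) ^ 2) * (a + s ^ 2 * a / (a - 1) - (1 + s) ^ 2)
          = (((a - 1) ^ 2 - s ^ 2) / (a - 1)) ^ 2 by field_simp; ring]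
      exact Real.sqrt_sq hDpos.le
    rw [hsq]
    field_simp
    ring
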